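/- arXiv:1007.3021 — 2 statements merged into one kernel-verified Lean document; each statement's English description precedes it below -/
import Mathlib

section
/- The language Dup of duplicated strings belongs to 1C=LIN/lin; that is, there exist a finite advice alphabet Γ, an advice function h : ℕ → Γ* with |h(n)| = n, and a rational 1pfa M over the alphabet {0,1} × Γ such that for every x ∈ {0,1}*: x ∈ Dup if and only if p_acc([x//h(|x|)]) = 1/2. -/
open scoped BigOperators

/-- A rational one-way probabilistic finite automaton over alphabet `Λ`
(with endmarker matrices `matC` for ¢ and `matD` for $). -/
structure PFA (Λ : Type) where
  Q : Type
  fin : Fintype Q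
  dec : DecidableEq Q
  start : Q
  final : Finset Q
  matC : Matrix Q Q ℚ
  matD : Matrix Q Q ℚ
  mat : Λ → Matrix Q Q ℚ
  nonnegC : ∀ i j, 0 ≤ matC i j
  nonnegD : ∀ i j, 0 ≤ matD i j
  nonnegMat : ∀ σ i j, 0 ≤ mat σ i j
  rowC : ∀ i, ∑ j ∈ fin.elems, matC i j = 1
  rowD : ∀ i, ∑ j ∈ fin.elems, matD i j = 1
  rowMat : ∀ σ i, ∑ j ∈ fin.elems, mat σ i j = 1

/-- Acceptance probability of a 1pfa on an input string. -/
def PFA.accProb {Λ : Type} (M : PFA Λ) (x : List Λ) : ℚ :=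
  letI := M.fin
  letI := M.dec
  ∑ q ∈ M.final,
    (Matrix.vecMul
      (x.foldl (fun v σ => Matrix.vecMul v (M.mat σ))
        (Matrix.vecMul (Pi.single M.start 1) M.matC))
      M.matD) q

/-- `D` is a probability distribution on `Γ^n`. -/
def IsDist {Γ : Type} [Fintype Γ] {n : ℕ} (D : List.Vector Γ n → ℝ) : Prop :=
  (∀ y, 0 ≤ D y) ∧ ∑ y, D y = 1

open Classical in
/-- Probability, under randomized advice `D`, that the track string `[x//y]` lies in `L`. -/
noncomputable def randAccProb {Alp Γ : Type} [Fintype Γ] (L : Set (List (Alp × Γ)))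
    {n : ℕ} (D : List.Vector Γ n → ℝ) (x : List Alp) : ℝ :=
  ∑ y : List.Vector Γ n, if x.zip y.toList ∈ L then D y else 0

/-- `S ∈ REG/n`. -/
def InREGn {Alp : Type} (S : Set (List Alp)) : Prop :=
  ∃ (Γ : Type) (_ : Fintype Γ) (h : ℕ → List Γ), (∀ n, (h n).length = n) ∧
    ∃ (Q : Type) (_ : Fintype Q) (M : DFA (Alp × Γ) Q),
      ∀ x : List Alp, x ∈ S ↔ x.zip (h x.length) ∈ M.accepts

/-- `S ∈ REG/Rn` (bounded error, randomized advice). -/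
def InREGRn {Alp : Type} (S : Set (List Alp)) : Prop :=
  ∃ (Γ : Type) (iΓ : Fintype Γ),
    letI := iΓ
    ∃ (Q : Type) (_ : Fintype Q) (M : DFA (Alp × Γ) Q) (ε : ℝ),
      0 ≤ ε ∧ ε < 1 / 2 ∧
        ∃ D : (n : ℕ) → List.Vector Γ n → ℝ, (∀ n, IsDist (D n)) ∧
          ∀ (n : ℕ) (x : List Alp), x.length = n →
            (x ∈ S → 1 - ε ≤ randAccProb M.accepts (D n) x) ∧
            (x ∉ S → randAccProb M.accepts (D n) x ≤ ε)

/-- `S ∈ CFL/n`. -/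
def InCFLn {Alp : Type} (S : Set (List Alp)) : Prop :=
  ∃ (Γ : Type) (_ : Fintype Γ) (h : ℕ → List Γ), (∀ n, (h n).length = n) ∧
    ∃ L : Language (Alp × Γ), L.IsContextFree ∧
      ∀ x : List Alp, x ∈ S ↔ x.zip (h x.length) ∈ L

/-- `S ∈ CFL/Rn` (bounded error, randomized advice). -/
def InCFLRn {Alp : Type} (S : Set (List Alp)) : Prop :=
  ∃ (Γ : Type) (iΓ : Fintype Γ),
    letI := iΓ
    ∃ (L : Language (Alp × Γ)), L.IsContextFree ∧
      ∃ (ε : ℝ), 0 ≤ ε ∧ ε < 1 / 2 ∧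
        ∃ D : (n : ℕ) → List.Vector Γ n → ℝ, (∀ n, IsDist (D n)) ∧
          ∀ (n : ℕ) (x : List Alp), x.length = n →
            (x ∈ S → 1 - ε ≤ randAccProb L (D n) x) ∧
            (x ∉ S → randAccProb L (D n) x ≤ ε)

/-- `A ∈ 1C=LIN/lin` via the paper's 1pfa characterization. -/
def InOneCeqLin {Alp : Type} (A : Set (List Alp)) : Prop :=
  ∃ (Γ : Type) (_ : Fintype Γ) (h : ℕ → List Γ), (∀ n, (h n).length = n) ∧
    ∃ M : PFA (Alp × Γ),
      ∀ x : List Alp, x ∈ A ↔ M.accProb (x.zip (h x.length)) = 1 / 2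

/-- `A ∈ 1PLIN/lin` via the paper's 1pfa characterization. -/
def InOnePLin {Alp : Type} (A : Set (List Alp)) : Prop :=
  ∃ (Γ : Type) (_ : Fintype Γ) (h : ℕ → List Γ), (∀ n, (h n).length = n) ∧
    ∃ M : PFA (Alp × Γ),
      ∀ x : List Alp, x ∈ A ↔ 1 / 2 < M.accProb (x.zip (h x.length))

open Classical in
/-- `(A, μ) ∈ aver-REG/n`. -/
def InAverREGn {Alp : Type} [Fintype Alp] (A : Set (List Alp))
    (μ : (n : ℕ) → List.Vector Alp n → ℝ) : Prop :=
  ∃ (Γ : Type) (_ : Fintype Γ) (h : ℕ → List Γ), (∀ n, (h n).length = n) ∧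
    ∃ (Q : Type) (_ : Fintype Q) (M : DFA (Alp × Γ) Q) (ε : ℝ),
      0 ≤ ε ∧ ε < 1 / 2 ∧
        ∀ n : ℕ, 1 - ε ≤ ∑ x : List.Vector Alp n,
          if (x.toList.zip (h n) ∈ M.accepts ↔ x.toList ∈ A) then μ n x else 0

/-- The language `Dup = {ww : w ∈ {0,1}*}`. -/
def Dup : Set (List Bool) := {z | ∃ w : List Bool, z = w ++ w}

/-- The marked palindrome language `Pal_# = {w#w^R}` over the alphabet
`Option Bool` (with `none` playing the role of the marker `#`). -/
def PalHash : Set (List (Option Bool)) :=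
  {z | ∃ w : List Bool, z = w.map some ++ none :: (w.reverse.map some)}

/-- Inner product (number of common `true` positions) of two bit strings. -/
def innerProd (u v : List Bool) : ℕ :=
  ((u.zip v).filter fun p => p.1 && p.2).length

/-- The language `IP_* = {axy : a ∈ {λ,0,1}, |x| = |y|, x^R ⊙ y ≡ 0 (mod 2)}`. -/
def IPstar : Language Bool :=
  {z | ∃ a x y : List Bool, (a = [] ∨ a = [false] ∨ a = [true]) ∧
    z = a ++ x ++ y ∧ x.length = y.length ∧ innerProd x.reverse y % 2 = 0}

/-- A negligible function. -/
def Negligible (f : ℕ → ℝ) : Prop :=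
  ∀ k : ℕ, 0 < k → ∃ N : ℕ, ∀ n ≥ N, f n ≤ 1 / (n : ℝ) ^ k

/-- `L` is `REG/n`-pseudorandom. -/
def RegPseudorandom {Alp : Type} [Fintype Alp] (L : Set (List Alp)) : Prop :=
  ∀ B : Set (List Alp), InREGn B →
    Negligible fun n =>
      |(((symmDiff B L) ∩ {x | x.length = n}).ncard : ℝ) /
        (Fintype.card Alp : ℝ) ^ n - 1 / 2|


@[simp] theorem cons_val_five' {α : Type*} (x : α) (u : Fin 5 → α) : Matrix.vecCons x u 5 = u 4 := rfl

namespace DupProof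

def hh (t : Bool) : ℚ := cond t (1/2) 0

def mA (t : Bool) : Matrix (Fin 6) (Fin 6) ℚ :=
  !![1/16,0,0,0,15/16,0;
     0,1,0,0,0,0;
     hh t,0,1/4,0,3/4 - hh t,0;
     0,0,0,1,0,0;
     0,0,0,0,1,0;
     0,0,0,0,0,1]

def mB (t : Bool) : Matrix (Fin 6) (Fin 6) ℚ :=
  !![1,0,0,0,0,0;
     0,1/16,0,0,15/16,0;
     0,0,1,0,0,0;
     0,hh t,0,1/4,3/4 - hh t,0;
     0,0,0,0,1,0;
     0,0,0,0,0,1]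

def mBad : Matrix (Fin 6) (Fin 6) ℚ :=
  !![0,0,0,0,0,1;
     0,0,0,0,0,1;
     0,0,0,0,0,1;
     0,0,0,0,0,1;
     0,0,0,0,0,1;
     0,0,0,0,0,1]

def mC : Matrix (Fin 6) (Fin 6) ℚ :=
  !![1,0,0,0,0,0;
     0,1,0,0,0,0;
     0,0,1,0,0,0;
     0,0,0,1,0,0;
     0,0,1/4,1/4,1/2,0;
     0,0,0,0,0,1]

def mD : Matrix (Fin 6) (Fin 6) ℚ :=
  !![1,0,0,0,0,0;
     0,1,0,0,0,0;
     1/2,1/2,0,0,0,0;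
     1/2,1/2,0,0,0,0;
     1/2,1/2,0,0,0,0;
     0,0,0,0,0,1]

def dmat (σ : Bool × Fin 3) : Matrix (Fin 6) (Fin 6) ℚ :=
  if σ.2 = 0 then mA σ.1 else if σ.2 = 1 then mB σ.1 else mBad

def dstep (v : Fin 6 → ℚ) (σ : Bool × Fin 3) : Fin 6 → ℚ := Matrix.vecMul v (dmat σ)

lemma hh_nonneg (t : Bool) : 0 ≤ hh t := by cases t <;> norm_num [hh]
lemma hh_le (t : Bool) : hh t ≤ 1/2 := by cases t <;> norm_num [hh]

lemma dmat_nonneg (σ : Bool × Fin 3) (i j : Fin 6) : 0 ≤ dmat σ i j := by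
  rcases σ with ⟨t, g⟩
  have h1 := hh_nonneg t
  have h2 := hh_le t
  fin_cases g <;> fin_cases i <;> fin_cases j <;>
    simp [dmat, mA, mB, mBad, Matrix.vecHead, Matrix.vecTail] <;> linarith

lemma dmat_row (σ : Bool × Fin 3) (i : Fin 6) : ∑ j, dmat σ i j = 1 := by
  rcases σ with ⟨t, g⟩
  fin_cases g <;> fin_cases i <;> cases t <;>
    simp [dmat, mA, mB, mBad, hh, Fin.sum_univ_six, Matrix.vecHead, Matrix.vecTail] <;> norm_num

lemma mC_nonneg (i j : Fin 6) : 0 ≤ mC i j := by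
  fin_cases i <;> fin_cases j <;> norm_num [mC]

lemma mD_nonneg (i j : Fin 6) : 0 ≤ mD i j := by
  fin_cases i <;> fin_cases j <;> norm_num [mD]

lemma mC_row (i : Fin 6) : ∑ j, mC i j = 1 := by
  fin_cases i <;> simp [mC, Fin.sum_univ_six] <;> norm_num

lemma mD_row (i : Fin 6) : ∑ j, mD i j = 1 := by
  fin_cases i <;> simp [mD, Fin.sum_univ_six] <;> norm_num

lemma stepA (t : Bool) (p b u c r d : ℚ) :
    dstep ![p,b,u,c,r,d] (t, 0)
      = ![p/16 + hh t * u, b, u/4, c, 15/16*p + (3/4 - hh t)*u + r, d] := by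
  funext j; fin_cases j <;>
    simp [dstep, dmat, mA, Matrix.vecMul, dotProduct, Fin.sum_univ_six,
      Matrix.vecHead, Matrix.vecTail] <;> ring

lemma stepB (t : Bool) (p b u c r d : ℚ) :
    dstep ![p,b,u,c,r,d] (t, 1)
      = ![p, b/16 + hh t * c, u, c/4, 15/16*b + (3/4 - hh t)*c + r, d] := by
  funext j; fin_cases j <;>
    simp [dstep, dmat, mB, Matrix.vecMul, dotProduct, Fin.sum_univ_six,
      Matrix.vecHead, Matrix.vecTail] <;> ring

lemma stepBad (t : Bool) (p b u c r d : ℚ) :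
    dstep ![p,b,u,c,r,d] (t, 2)
      = ![0, 0, 0, 0, 0, p+b+u+c+r+d] := by
  funext j; fin_cases j <;>
    simp [dstep, dmat, mBad, Matrix.vecMul, dotProduct, Fin.sum_univ_six,
      Matrix.vecHead, Matrix.vecTail] <;> ring

/-- value of a bit string, head least significant, base 4. -/
def natval : List Bool → ℕ
  | [] => 0
  | t :: s => (cond t 1 0) + 4 * natval s

lemma natval_inj : ∀ a b : List Bool, a.length = b.length → natval a = natval b → a = b
  | [], [], _, _ => rfl
  | t :: s, t' :: s', hl, hv => by
    simp only [List.length_cons, Nat.add_right_cancel_iff] at hl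
    have hv' : (cond t 1 0) + 4 * natval s = (cond t' 1 0) + 4 * natval s' := hv
    have ht : t = t' := by cases t <;> cases t' <;> simp_all <;> omega
    have hs : natval s = natval s' := by cases t <;> cases t' <;> simp_all <;> omega
    rw [ht, natval_inj s s' hl hs]

lemma foldA : ∀ (a : List Bool) (p b u c r d : ℚ), ∃ r',
    (a.map (fun t => (t, (0 : Fin 3)))).foldl dstep ![p,b,u,c,r,d]
      = ![p/16^a.length + u * (8 * natval a / 16^a.length), b, u/4^a.length, c, r', d] := by
  intro a
  induction a with
  | nil =>
    intro p b u c r d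
    exact ⟨r, by norm_num [natval]⟩
  | cons t s ih =>
    intro p b u c r d
    obtain ⟨r', hr'⟩ := ih (p/16 + hh t * u) b (u/4) c (15/16*p + (3/4 - hh t)*u + r) d
    refine ⟨r', ?_⟩
    rw [List.map_cons, List.foldl_cons, stepA, hr']
    funext j
    fin_cases j <;> cases t <;> simp [natval, hh, pow_succ] <;> push_cast <;> ring

lemma foldB : ∀ (a : List Bool) (p b u c r d : ℚ), ∃ r',
    (a.map (fun t => (t, (1 : Fin 3)))).foldl dstep ![p,b,u,c,r,d]
      = ![p, b/16^a.length + c * (8 * natval a / 16^a.length), u, c/4^a.length, r', d] := by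
  intro a
  induction a with
  | nil =>
    intro p b u c r d
    exact ⟨r, by norm_num [natval]⟩
  | cons t s ih =>
    intro p b u c r d
    obtain ⟨r', hr'⟩ := ih p (b/16 + hh t * c) u (c/4) (15/16*b + (3/4 - hh t)*c + r) d
    refine ⟨r', ?_⟩
    rw [List.map_cons, List.foldl_cons, stepB, hr']
    funext j
    fin_cases j <;> cases t <;> simp [natval, hh, pow_succ] <;> push_cast <;> ring

lemma foldBad : ∀ (l : List (Bool × Fin 3)), (∀ σ ∈ l, σ.2 = 2) → ∀ s : ℚ,
    l.foldl dstep ![0,0,0,0,0,s] = ![0,0,0,0,0,s] := by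
  intro l
  induction l with
  | nil => intro _ s; rfl
  | cons σ l ih =>
    intro h s
    rcases σ with ⟨t, g⟩
    have hg : g = 2 := h _ List.mem_cons_self
    subst hg
    rw [List.foldl_cons]
    have h2 : dstep ![(0:ℚ),0,0,0,0,s] (t, 2) = ![0,0,0,0,0,s] := by
      rw [stepBad]; norm_num
    rw [h2]
    exact ih (fun σ hσ => h σ (List.mem_cons_of_mem _ hσ)) s

lemma sum_vecMul (M : Matrix (Fin 6) (Fin 6) ℚ) (h : ∀ i, ∑ j, M i j = 1) (v : Fin 6 → ℚ) :
    ∑ j, Matrix.vecMul v M j = ∑ i, v i := by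
  simp only [Matrix.vecMul, dotProduct]
  rw [Finset.sum_comm]
  simp [← Finset.mul_sum, h]

lemma sum_foldl : ∀ (l : List (Bool × Fin 3)) (v : Fin 6 → ℚ),
    ∑ j, (l.foldl dstep v) j = ∑ j, v j := by
  intro l
  induction l with
  | nil => intro v; rfl
  | cons σ l ih =>
    intro v
    rw [List.foldl_cons, ih]
    exact sum_vecMul _ (dmat_row σ) v

lemma zip_repl : ∀ (l : List Bool) (g : Fin 3),
    l.zip (List.replicate l.length g) = l.map (fun t => (t, g)) := by
  intro l g
  induction l with
  | nil => rfl
  | cons t s ih => simp [List.replicate_succ, ih]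

def adv (n : ℕ) : List (Fin 3) :=
  if n % 2 = 0 then List.replicate (n/2) 0 ++ List.replicate (n/2) 1
  else List.replicate n 2

lemma adv_len (n : ℕ) : (adv n).length = n := by
  unfold adv; split_ifs with h <;> simp <;> omega


lemma init_eq : Matrix.vecMul (Pi.single (4:Fin 6) (1:ℚ)) mC = ![0,0,1/4,1/4,1/2,0] := by
  funext j
  fin_cases j <;>
    simp [mC, Matrix.vecMul, dotProduct, Fin.sum_univ_six, Pi.single_apply,
      Matrix.vecHead, Matrix.vecTail] <;> norm_num

lemma finD (p b u c r d : ℚ) :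
    Matrix.vecMul ![p,b,u,c,r,d] mD 0 = p + u/2 + c/2 + r/2 := by
  simp [mD, Matrix.vecMul, dotProduct, Fin.sum_univ_six,
    Matrix.vecHead, Matrix.vecTail]
  ring

lemma deadD : Matrix.vecMul ![(0:ℚ),0,0,0,0,1] mD 0 = 0 := by
  simp [mD, Matrix.vecMul, dotProduct, Fin.sum_univ_six,
    Matrix.vecHead, Matrix.vecTail]

lemma even_key (a b : List Bool) (m : ℕ) (ha : a.length = m) (hb : b.length = m) :
    (Matrix.vecMul (((a.map fun t => (t,(0:Fin 3))) ++ (b.map fun t => (t,(1:Fin 3)))).foldl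
      dstep ![0,0,1/4,1/4,1/2,0]) mD) 0 = 1/2 ↔ a = b := by
  obtain ⟨r1, h1⟩ := foldA a 0 0 (1/4) (1/4) (1/2) 0
  obtain ⟨r2, h2⟩ := foldB b (0/16^a.length + 1/4 * (8 * natval a / 16^a.length)) 0
    ((1/4)/4^a.length) (1/4) r1 0
  have hs2 := sum_foldl ((a.map fun t => (t,(0:Fin 3))) ++ (b.map fun t => (t,(1:Fin 3))))
    ![0,0,1/4,1/4,1/2,0]
  rw [List.foldl_append, h1, h2] at hs2 ⊢
  rw [finD]
  rw [ha, hb] at hs2 ⊢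
  simp only [Fin.sum_univ_six, Matrix.cons_val_zero, Matrix.cons_val_one, Matrix.head_cons,
    Matrix.cons_val_two, Matrix.cons_val_three, Matrix.cons_val_four, cons_val_five',
    Matrix.head_fin_const, Matrix.vecHead, Matrix.vecTail, Matrix.cons_val] at hs2
  norm_num at hs2 ⊢
  dsimp [Matrix.vecCons, Fin.cons, Fin.cases, Fin.induction, Fin.induction.go] at hs2
  have h16 : ((16:ℚ))^m ≠ 0 := by positivity
  constructor
  · intro hE
    have hAB : 8 * ((natval a : ℚ)) / 16^m = 8 * ((natval b : ℚ)) / 16^m := by linarith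
    have hN : (natval a : ℚ) = (natval b : ℚ) := by
      rw [div_eq_div_iff h16 h16] at hAB
      have := mul_right_cancel₀ h16 hAB
      linarith
    exact natval_inj a b (ha.trans hb.symm) (by exact_mod_cast hN)
  · intro hab
    subst hab
    rw [ha] at hb
    linarith

def myM : PFA (Bool × Fin 3) where
  Q := Fin 6
  fin := inferInstance
  dec := inferInstance
  start := 4
  final := {0}
  matC := mC
  matD := mD
  mat := dmat
  nonnegC := mC_nonneg
  nonnegD := mD_nonneg
  nonnegMat := dmat_nonneg
  rowC := mC_row
  rowD := mD_row
  rowMat := dmat_row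

lemma acc_eq (z : List (Bool × Fin 3)) :
    myM.accProb z
      = Matrix.vecMul (z.foldl dstep (Matrix.vecMul (Pi.single (4:Fin 6) 1) mC)) mD 0 := by
  show ∑ q ∈ ({0} : Finset (Fin 6)), _ = _
  erw [Finset.sum_singleton]
  rfl

end DupProof

theorem stmt4 : InOneCeqLin Dup := by
  classical
  refine ⟨Fin 3, inferInstance, DupProof.adv, DupProof.adv_len, DupProof.myM, ?_⟩
  intro x
  by_cases hpar : x.length % 2 = 0
  · set m := x.length / 2 with hm
    have hlen : x.length = m + m := by omega
    have hadv : DupProof.adv x.length = List.replicate m 0 ++ List.replicate m 1 := by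
      rw [DupProof.adv, if_pos hpar]
    have ha : (x.take m).length = m := by simp; omega
    have hb : (x.drop m).length = m := by simp; omega
    have hzip : x.zip (DupProof.adv x.length)
        = ((x.take m).map fun t => (t,(0:Fin 3))) ++ ((x.drop m).map fun t => (t,(1:Fin 3))) := by
      rw [hadv]
      conv_lhs => rw [← List.take_append_drop m x]
      rw [List.zip_append (by rw [ha]; simp)]
      have e0 : List.replicate m (0:Fin 3) = List.replicate (x.take m).length 0 := by rw [ha]
      have e1 : List.replicate m (1:Fin 3) = List.replicate (x.drop m).length 1 := by rw [hb]
      rw [e0, e1, DupProof.zip_repl, DupProof.zip_repl]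
    have hdup : x ∈ Dup ↔ x.take m = x.drop m := by
      constructor
      · rintro ⟨w, rfl⟩
        have hw : w.length = m := by simp at hlen; omega
        rw [List.take_left' hw, List.drop_left' hw]
      · intro hab
        exact ⟨x.take m, by nth_rewrite 1 [← List.take_append_drop m x]; rw [hab]⟩
    rw [DupProof.acc_eq, hzip, DupProof.init_eq, hdup]
    exact (DupProof.even_key _ _ m ha hb).symm
  · have hx : x ≠ [] := by
      intro h; rw [h] at hpar; simp at hpar
    have hadv : DupProof.adv x.length = List.replicate x.length 2 := by
      rw [DupProof.adv, if_neg hpar]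
    have hzip : x.zip (DupProof.adv x.length) = x.map fun t => (t,(2:Fin 3)) := by
      rw [hadv, DupProof.zip_repl]
    rw [DupProof.acc_eq, hzip, DupProof.init_eq]
    obtain ⟨t, xs, rfl⟩ := List.exists_cons_of_ne_nil hx
    rw [List.map_cons, List.foldl_cons]
    have h1 : DupProof.dstep ![0,0,1/4,1/4,1/2,0] (t,2) = ![0,0,0,0,0,1] := by
      rw [DupProof.stepBad]; norm_num
    rw [h1, DupProof.foldBad _ (by
      intro σ hσ
      obtain ⟨t', -, rfl⟩ := List.mem_map.mp hσ
      rfl) 1]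
    rw [DupProof.deadD]
    constructor
    · rintro ⟨w, hw⟩
      exfalso
      have : (t :: xs).length = w.length + w.length := by rw [hw]; simp
      omega
    · intro h; norm_num at h
end

section
/- The marked palindrome language Pal_# belongs to REG/Rn, and in fact with error bound ε = 1/4: there exist a finite advice alphabet Γ, a DFA M over {0,1,#} × Γ, and, for each n, a probability distribution D_n on Γ^n such that for every x ∈ {0,1,#}^n: if x ∈ Pal_# then Pr_{y∼D_n}[M accepts [x//y]] ≥ 3/4, and if x ∉ Pal_# then Pr_{y∼D_n}[M accepts [x//y]] ≤ 1/4. -/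
open scoped BigOperators

abbrev Gam := Option (Bool × Bool)
abbrev St := Option (Bool × Bool × Bool)

def ip : List Bool → List Bool → Bool
  | a :: as, b :: bs => xor (a && b) (ip as bs)
  | _, _ => false

@[simp] lemma ip_nil_left (b : List Bool) : ip [] b = false := by cases b <;> rfl
@[simp] lemma ip_cons (a : Bool) (as : List Bool) (b : Bool) (bs : List Bool) :
    ip (a :: as) (b :: bs) = xor (a && b) (ip as bs) := rfl

lemma ip_concat : ∀ (as bs : List Bool) (a b : Bool), as.length = bs.length →
    ip (as ++ [a]) (bs ++ [b]) = xor (a && b) (ip as bs)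
  | [], [], a, b, _ => by simp [ip]
  | x :: as, y :: bs, a, b, h => by
      simp only [List.cons_append, ip_cons, ip_concat as bs a b (by simpa using h)]
      rw [← Bool.xor_assoc, ← Bool.xor_assoc, Bool.xor_comm (x && y) (a && b)]

lemma ip_reverse : ∀ (as bs : List Bool), as.length = bs.length →
    ip as.reverse bs.reverse = ip as bs
  | [], [], _ => rfl
  | x :: as, y :: bs, h => by
      simp only [List.reverse_cons]
      rw [ip_concat _ _ _ _ (by simpa using h), ip_reverse as bs (by simpa using h)]
      rfl
  | [], _ :: _, h => by simp at h
  | _ :: _, [], h => by simp at h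

lemma ip_xor_left : ∀ (as bs s : List Bool), as.length = bs.length →
    ip (List.zipWith xor as bs) s = xor (ip as s) (ip bs s)
  | [], [], s, _ => by simp
  | x :: as, y :: bs, [], h => by simp [ip]
  | x :: as, y :: bs, c :: s, h => by
      simp only [List.zipWith_cons_cons, ip_cons, ip_xor_left as bs s (by simpa using h)]
      cases x <;> cases y <;> cases c <;> simp
  | [], _ :: _, _, h => by simp at h
  | _ :: _, [], _, h => by simp at h

lemma mem_zipWith_xor : ∀ (as bs : List Bool), as.length = bs.length →
    (true ∈ List.zipWith xor as bs ↔ as ≠ bs)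
  | [], [], _ => by simp
  | x :: as, y :: bs, h => by
      simp only [List.zipWith_cons_cons, List.mem_cons, mem_zipWith_xor as bs (by simpa using h)]
      cases x <;> cases y <;> simp [eq_comm]
  | [], _ :: _, h => by simp at h
  | _ :: _, [], h => by simp at h

def mstep : St → (Option Bool × Gam) → St
  | some (false, p1, p2), (none, none) => some (true, p1, p2)
  | some (ph, p1, p2), (some a, some (c, d)) => some (ph, xor p1 (a && c), xor p2 (a && d))
  | _, _ => none

def Mpal : DFA (Option Bool × Gam) St :=
  ⟨mstep, some (false, false, false), {some (true, false, false)}⟩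

@[simp] lemma mstep_none (σ : Option Bool × Gam) : mstep none σ = none := rfl

lemma evalFrom_cons (s : St) (a : Option Bool × Gam) (l : List (Option Bool × Gam)) :
    Mpal.evalFrom s (a :: l) = Mpal.evalFrom (mstep s a) l := rfl

@[simp] lemma evalFrom_none (l : List (Option Bool × Gam)) : Mpal.evalFrom none l = none := by
  induction l with
  | nil => rfl
  | cons a l ih => rw [evalFrom_cons, mstep_none]; exact ih

lemma mstep_kill (q : St) (g : Bool × Bool) : mstep q (none, some g) = none := by
  rcases q with _ | ⟨ph, p1, p2⟩
  · rfl
  · cases ph <;> rfl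

lemma mstep_kill' (q : St) (b : Option Bool) : mstep q (b, none) = none ∨
    (b = none ∧ ∃ p1 p2, q = some (false, p1, p2) ∧ mstep q (b, none) = some (true, p1, p2)) := by
  rcases q with _ | ⟨ph, p1, p2⟩
  · left; cases b <;> rfl
  · cases ph <;> cases b <;> simp [mstep]

lemma evalFrom_kill : ∀ (A : List (Option Bool)) (r : List (Bool × Bool)) (q : St),
    none ∈ A → A.length = r.length → Mpal.evalFrom q (A.zip (r.map some)) = none
  | a :: A, g :: r, q, hm, hl => by
      rw [List.map_cons, List.zip_cons_cons, evalFrom_cons]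
      rcases a with _ | b
      · rw [mstep_kill]; exact evalFrom_none _
      · have : none ∈ A := by simpa using hm
        exact evalFrom_kill A r _ this (by simpa using hl)
  | [], _, _, hm, _ => by simp at hm
  | _ :: _, [], _, _, hl => by simp at hl

lemma mstep_run (ph p1 p2 a c d : Bool) :
    mstep (some (ph, p1, p2)) (some a, some (c, d)) = some (ph, xor p1 (a && c), xor p2 (a && d)) := by
  cases ph <;> rfl

lemma evalFrom_run : ∀ (w : List Bool) (r : List (Bool × Bool)) (ph p1 p2 : Bool),
    w.length = r.length →
    Mpal.evalFrom (some (ph, p1, p2)) ((w.map some).zip (r.map some)) =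
      some (ph, xor p1 (ip w (r.map Prod.fst)), xor p2 (ip w (r.map Prod.snd)))
  | [], [], ph, p1, p2, _ => by simp
  | a :: w, ⟨c, d⟩ :: r, ph, p1, p2, h => by
      rw [List.map_cons, List.map_cons, List.zip_cons_cons, evalFrom_cons, mstep_run,
        evalFrom_run w r ph _ _ (by simpa using h)]
      simp [Bool.xor_assoc]
  | [], _ :: _, _, _, _, h => by simp at h
  | _ :: _, [], _, _, _, h => by simp at h

def enc (r : List (Bool × Bool)) : List Gam := r.map some ++ none :: (r.reverse.map some)

@[simp] lemma enc_length (r : List (Bool × Bool)) : (enc r).length = 2 * r.length + 1 := by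
  simp [enc]; ring

lemma eval_good (w v : List Bool) (r : List (Bool × Bool)) (hw : w.length = r.length)
    (hv : v.length = r.length) :
    Mpal.eval ((w.map some ++ none :: v.map some).zip (enc r)) =
      some (true, xor (ip w (r.map Prod.fst)) (ip v ((r.reverse).map Prod.fst)),
                  xor (ip w (r.map Prod.snd)) (ip v ((r.reverse).map Prod.snd))) := by
  show Mpal.evalFrom _ _ = _
  unfold enc
  rw [List.zip_append (by simp [hw]), List.zip_cons_cons, DFA.evalFrom_of_append]
  have h1 : Mpal.evalFrom Mpal.start ((w.map some).zip (r.map some)) =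
      some (false, ip w (r.map Prod.fst), ip w (r.map Prod.snd)) := by
    have := evalFrom_run w r false false false (by simpa using hw)
    simpa [show Mpal.start = some (false, false, false) from rfl] using this
  rw [h1, evalFrom_cons]
  have h2 : mstep (some (false, ip w (r.map Prod.fst), ip w (r.map Prod.snd))) (none, none) =
      some (true, ip w (r.map Prod.fst), ip w (r.map Prod.snd)) := rfl
  rw [h2, evalFrom_run v r.reverse true _ _ (by simpa using hv)]

lemma all_some : ∀ (A : List (Option Bool)), none ∉ A → ∃ w : List Bool, A = w.map some
  | [], _ => ⟨[], rfl⟩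
  | a :: A, h => by
      rcases a with _ | b
      · exact absurd List.mem_cons_self h
      · obtain ⟨w, hw⟩ := all_some A (fun hc => h (List.mem_cons_of_mem _ hc))
        exact ⟨b :: w, by simp [hw]⟩

lemma eval_reject (A B : List (Option Bool)) (c : Option Bool) (r : List (Bool × Bool))
    (hA : A.length = r.length) (hB : B.length = r.length)
    (hbad : ¬ ∃ w v : List Bool, A = List.map some w ∧ c = none ∧ B = List.map some v) :
    (A ++ c :: B).zip (enc r) ∉ Mpal.accepts := by
  rw [DFA.mem_accepts]
  show Mpal.evalFrom _ _ ∈ _ → False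
  unfold enc
  rw [List.zip_append (by simp [hA]), List.zip_cons_cons, DFA.evalFrom_of_append]
  by_cases hnA : none ∈ A
  · rw [evalFrom_kill A r _ hnA hA, evalFrom_none]
    intro h; simpa [Mpal] using h
  · obtain ⟨w, rfl⟩ := all_some A hnA
    have hw : w.length = r.length := by simpa using hA
    have h1 := evalFrom_run w r false false false hw
    rw [show Mpal.start = some (false, false, false) from rfl, h1, evalFrom_cons]
    rcases c with _ | b
    · -- c = none
      have h2 : mstep (some (false, xor false (ip w (r.map Prod.fst)),
          xor false (ip w (r.map Prod.snd)))) (none, none) =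
          some (true, xor false (ip w (r.map Prod.fst)), xor false (ip w (r.map Prod.snd))) := rfl
      rw [h2]
      by_cases hnB : none ∈ B
      · rw [evalFrom_kill B r.reverse _ hnB (by simpa using hB), ]
        intro h; simpa [Mpal] using h
      · obtain ⟨v, rfl⟩ := all_some B hnB
        exact absurd ⟨w, v, rfl, rfl, rfl⟩ hbad
    · -- c = some b
      have h2 : mstep (some (false, xor false (ip w (r.map Prod.fst)),
          xor false (ip w (r.map Prod.snd)))) (some b, none) = none := rfl
      rw [h2, evalFrom_none]
      intro h; simpa [Mpal] using h

def vconsEquiv (α : Type) (m : ℕ) : α × List.Vector α m ≃ List.Vector α (m + 1) where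
  toFun p := p.1 ::ᵥ p.2
  invFun v := (v.head, v.tail)
  left_inv := by rintro ⟨a, v⟩; simp
  right_inv := fun v => List.Vector.cons_head_tail v

lemma sum_ip : ∀ (m : ℕ) (z : List Bool), z.length = m →
    (∑ s : List.Vector Bool m, (if ip z s.toList = false then (1:ℝ) else 0)) =
      if true ∈ z then 2 ^ m / 2 else 2 ^ m
  | 0, z, hz => by
      rw [List.length_eq_zero_iff] at hz; subst hz
      simp [Finset.sum_const, card_vector]
  | m + 1, z, hz => by
      rcases z with _ | ⟨b, z'⟩
      · simp at hz
      have hz' : z'.length = m := by simpa using hz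
      rw [← Equiv.sum_comp (vconsEquiv Bool m), Fintype.sum_prod_type]
      simp only [vconsEquiv, Equiv.coe_fn_mk, List.Vector.toList_cons, ip_cons]
      cases b
      · simp only [Bool.false_and, Bool.false_xor]
        rw [Fintype.sum_bool]
        rw [sum_ip m z' hz']
        by_cases h : true ∈ z' <;> simp [h] <;> ring
      · rw [Finset.sum_comm]
        have hrow : ∀ s : List.Vector Bool m,
            (∑ b' : Bool, if xor (true && b') (ip z' s.toList) = false then (1:ℝ) else 0) = 1 := by
          intro s
          rw [Fintype.sum_bool]
          cases h : ip z' s.toList <;> simp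
        rw [Finset.sum_congr rfl (fun s _ => hrow s)]
        simp [Finset.sum_const, card_vector, pow_succ]

lemma sum_ip2 : ∀ (m : ℕ) (z : List Bool), z.length = m →
    (∑ r : List.Vector (Bool × Bool) m,
      (if ip z (r.toList.map Prod.fst) = false ∧ ip z (r.toList.map Prod.snd) = false
        then (1:ℝ) else 0)) =
      if true ∈ z then 4 ^ m / 4 else 4 ^ m
  | 0, z, hz => by
      rw [List.length_eq_zero_iff] at hz; subst hz
      simp [Finset.sum_const, card_vector]
  | m + 1, z, hz => by
      rcases z with _ | ⟨b, z'⟩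
      · simp at hz
      have hz' : z'.length = m := by simpa using hz
      rw [← Equiv.sum_comp (vconsEquiv (Bool × Bool) m), Fintype.sum_prod_type]
      simp only [vconsEquiv, Equiv.coe_fn_mk, List.Vector.toList_cons, List.map_cons, ip_cons]
      cases b
      · simp only [Bool.false_and, Bool.false_xor]
        rw [Fintype.sum_prod_type, Fintype.sum_bool, Fintype.sum_bool]
        rw [sum_ip2 m z' hz']
        by_cases h : true ∈ z' <;> simp [h] <;> ring
      · have hrow : ∀ s : List.Vector (Bool × Bool) m,
            (∑ cd : Bool × Bool,
              if xor (true && cd.1) (ip z' (s.toList.map Prod.fst)) = false ∧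
                 xor (true && cd.2) (ip z' (s.toList.map Prod.snd)) = false then (1:ℝ) else 0) = 1 := by
          intro s
          rw [Fintype.sum_prod_type, Fintype.sum_bool, Fintype.sum_bool]
          cases h1 : ip z' (s.toList.map Prod.fst) <;> cases h2 : ip z' (s.toList.map Prod.snd) <;>
            simp
        rw [Finset.sum_comm]
        rw [Finset.sum_congr rfl (fun s _ => hrow s)]
        simp [Finset.sum_const, card_vector, pow_succ]

open Classical in
noncomputable def Dn (n : ℕ) : List.Vector Gam n → ℝ := fun y =>
  if n % 2 = 1 then
    (if ∃ r : List (Bool × Bool), y.toList = enc r then (1 / 4 : ℝ) ^ (n / 2) else 0)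
  else (if y.toList = List.replicate n none then 1 else 0)

def Evec (m : ℕ) (r : List.Vector (Bool × Bool) m) : List.Vector Gam (2 * m + 1) :=
  ⟨enc r.toList, by simp⟩

lemma enc_inj {r r' : List (Bool × Bool)} (hl : r.length = r'.length) (h : enc r = enc r') :
    r = r' := by
  have := congrArg (List.take r.length) h
  rw [enc, enc, show r.length = (r.map some).length by simp, List.take_left,
    show (r.map some).length = (r'.map some).length by simp [hl], List.take_left] at this
  exact List.map_injective_iff.2 (Option.some_injective _) this

lemma Evec_inj (m : ℕ) : Function.Injective (Evec m) := by
  intro r r' h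
  have h' : enc r.toList = enc r'.toList := congrArg Subtype.val h
  have := enc_inj (by rw [r.toList_length, r'.toList_length]) h'
  exact Subtype.ext this

lemma Dn_odd_val (m : ℕ) (r : List.Vector (Bool × Bool) m) :
    Dn (2 * m + 1) (Evec m r) = (1 / 4 : ℝ) ^ m := by
  rw [Dn, if_pos (by omega), if_pos ⟨r.toList, rfl⟩]
  congr 1
  omega

lemma Dn_odd_zero (m : ℕ) (y : List.Vector Gam (2 * m + 1))
    (h : ¬ ∃ r : List (Bool × Bool), y.toList = enc r) : Dn (2 * m + 1) y = 0 := by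
  rw [Dn, if_pos (by omega), if_neg h]

lemma sum_enc (m : ℕ) (f : List.Vector Gam (2 * m + 1) → ℝ)
    (h0 : ∀ y, (¬ ∃ r : List (Bool × Bool), y.toList = enc r) → f y = 0) :
    ∑ y, f y = ∑ r : List.Vector (Bool × Bool) m, f (Evec m r) := by
  classical
  rw [← Finset.sum_image (s := Finset.univ) (g := Evec m)
    (fun a _ b _ h => Evec_inj m h)]
  refine (Finset.sum_subset (Finset.subset_univ _) ?_).symm
  intro y _ hy
  refine h0 y ?_
  rintro ⟨r, hr⟩
  have hrl : r.length = m := by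
    have := y.toList_length
    rw [hr, enc_length] at this
    omega
  exact hy (Finset.mem_image.2 ⟨⟨r, hrl⟩, Finset.mem_univ _, Subtype.ext hr.symm⟩)

lemma even_reject (n : ℕ) (hn : n % 2 = 0) (x : List (Option Bool)) (hx : x.length = n) :
    x.zip (List.replicate n none) ∉ Mpal.accepts := by
  rw [DFA.mem_accepts]
  rcases x with _ | ⟨a, x'⟩
  · intro h; simpa [Mpal, DFA.eval] using h
  rcases x' with _ | ⟨b, t⟩
  · exfalso; simp at hx; omega
  have hk : n = t.length + 1 + 1 := by simp at hx; omega
  subst hk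
  show Mpal.evalFrom _ _ ∈ _ → False
  rw [List.replicate_succ, List.replicate_succ, List.zip_cons_cons, List.zip_cons_cons,
    evalFrom_cons, evalFrom_cons]
  rcases a with _ | a'
  · have h1 : mstep Mpal.start (none, none) = some (true, false, false) := rfl
    rw [h1]
    have h2 : mstep (some (true, false, false)) (b, none) = none := by
      rcases b with _ | b' <;> rfl
    rw [h2, evalFrom_none]
    intro h; simpa [Mpal] using h
  · have h1 : mstep Mpal.start (some a', none) = none := rfl
    rw [h1, mstep_none, evalFrom_none]
    intro h; simpa [Mpal] using h

lemma Dn_nonneg (n : ℕ) (y : List.Vector Gam n) : 0 ≤ Dn n y := by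
  rw [Dn]; split_ifs <;> positivity

lemma Dn_sum (n : ℕ) : ∑ y, Dn n y = 1 := by
  classical
  by_cases hn : n % 2 = 1
  · obtain ⟨m, rfl⟩ : ∃ m, n = 2 * m + 1 := ⟨n / 2, by omega⟩
    rw [sum_enc m (Dn _) (Dn_odd_zero m), Finset.sum_congr rfl (fun r _ => Dn_odd_val m r),
      Finset.sum_const, Finset.card_univ, card_vector, nsmul_eq_mul]
    push_cast
    rw [← mul_pow]
    norm_num
  · set y0 : List.Vector Gam n := ⟨List.replicate n none, by simp⟩ with hy0
    have : ∀ y : List.Vector Gam n, Dn n y = if y = y0 then 1 else 0 := by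
      intro y
      rw [Dn, if_neg hn]
      refine if_congr ?_ rfl rfl
      constructor
      · intro h; apply List.Vector.toList_injective; rw [h]; rfl
      · intro h; rw [h]; rfl
    rw [Finset.sum_congr rfl (fun y _ => this y), Finset.sum_ite_eq' Finset.univ y0 (fun _ => 1)]
    simp

lemma split_pal {A B : List (Option Bool)} {c : Option Bool} {m : ℕ} (hAl : A.length = m)
    (hBl : B.length = m) (h : (A ++ c :: B) ∈ PalHash) :
    ∃ u : List Bool, u.length = m ∧ A = u.map some ∧ c = none ∧ B = u.reverse.map some := by
  obtain ⟨u, hu⟩ := h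
  have hlen := congrArg List.length hu
  simp only [List.length_append, List.length_cons, List.length_map, List.length_reverse] at hlen
  have hul : u.length = m := by omega
  obtain ⟨h1, h2⟩ := List.append_inj hu (by simp [hAl, hul])
  injection h2 with h2a h2b
  exact ⟨u, hul, h1, h2a, h2b⟩

lemma master (n : ℕ) (x : List (Option Bool)) (hx : x.length = n) :
    (x ∈ PalHash → randAccProb Mpal.accepts (Dn n) x = 1) ∧
    (x ∉ PalHash → randAccProb Mpal.accepts (Dn n) x ≤ 1 / 4) := by
  classical
  by_cases hn : n % 2 = 1
  · obtain ⟨m, rfl⟩ : ∃ m, n = 2 * m + 1 := ⟨n / 2, by omega⟩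
    have hxm : m < x.length := by omega
    obtain ⟨A, c, B, hx2, hAl, hBl⟩ :
        ∃ A c B, x = A ++ c :: B ∧ A.length = m ∧ B.length = m := by
      refine ⟨x.take m, x[m]'hxm, x.drop (m + 1), ?_, ?_, ?_⟩
      · conv_lhs => rw [← List.take_append_drop m x]
        rw [List.drop_eq_getElem_cons hxm]
      · rw [List.length_take]; omega
      · rw [List.length_drop]; omega
    subst hx2
    have hsum : randAccProb Mpal.accepts (Dn (2 * m + 1)) (A ++ c :: B) =
        ∑ r : List.Vector (Bool × Bool) m,
          (if (A ++ c :: B).zip (enc r.toList) ∈ Mpal.accepts then (1 / 4 : ℝ) ^ m else 0) := by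
      unfold randAccProb
      rw [sum_enc m _ (fun y hy => by rw [Dn_odd_zero m y hy, ite_self])]
      refine Finset.sum_congr rfl (fun r _ => ?_)
      rw [Dn_odd_val]
      rfl
    by_cases hgood : ∃ w v : List Bool, A = List.map some w ∧ c = none ∧ B = List.map some v
    · obtain ⟨w, v, rfl, rfl, rfl⟩ := hgood
      have hwl : w.length = m := by simpa using hAl
      have hvl : v.length = m := by simpa using hBl
      set z := List.zipWith xor w v.reverse with hz
      have hzl : z.length = m := by
        rw [hz, List.length_zipWith]
        simp [hwl, hvl]
      have key : ∀ s : List Bool, s.length = m →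
          (xor (ip w s) (ip v s.reverse) = ip z s) := by
        intro s hs
        have h1 : ip v s.reverse = ip v.reverse s := by
          have := ip_reverse v s.reverse (by simp [hvl, hs])
          rw [List.reverse_reverse] at this
          exact this.symm
        rw [h1, ip_xor_left w v.reverse s (by simp [hwl, hvl])]
      have hcond : ∀ r : List.Vector (Bool × Bool) m,
          ((List.map some w ++ none :: List.map some v).zip (enc r.toList) ∈ Mpal.accepts) ↔
          (ip z (r.toList.map Prod.fst) = false ∧ ip z (r.toList.map Prod.snd) = false) := by
        intro r
        have hrl : r.toList.length = m := r.toList_length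
        rw [DFA.mem_accepts,
          show Mpal.eval ((List.map some w ++ none :: List.map some v).zip (enc r.toList)) = _ from
            eval_good w v r.toList (by omega) (by omega)]
        rw [show (Mpal.accept : Set St) = {some (true, false, false)} from rfl]
        rw [Set.mem_singleton_iff, Option.some.injEq, Prod.mk.injEq, Prod.mk.injEq]
        rw [List.map_reverse, List.map_reverse]
        rw [key (r.toList.map Prod.fst) (by simp [hrl]), key (r.toList.map Prod.snd) (by simp [hrl])]
        simp
      rw [hsum, Finset.sum_congr rfl (fun r _ => if_congr (hcond r) rfl rfl)]
      have hfact : (∑ r : List.Vector (Bool × Bool) m,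
          if ip z (r.toList.map Prod.fst) = false ∧ ip z (r.toList.map Prod.snd) = false
            then (1 / 4 : ℝ) ^ m else 0) =
          (1 / 4 : ℝ) ^ m * (if true ∈ z then 4 ^ m / 4 else 4 ^ m) := by
        rw [← sum_ip2 m z hzl, Finset.mul_sum]
        exact Finset.sum_congr rfl (fun r _ => by rw [mul_ite, mul_one, mul_zero])
      rw [hfact]
      have hmem : (List.map some w ++ none :: List.map some v) ∈ PalHash ↔ v = w.reverse := by
        constructor
        · intro h
          obtain ⟨u, _, h1, _, h3⟩ := split_pal (by simpa using hAl) (by simpa using hBl) h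
          have : w = u := List.map_injective_iff.2 (Option.some_injective _) h1
          subst this
          exact List.map_injective_iff.2 (Option.some_injective _) h3
        · intro h; exact ⟨w, by rw [h]⟩
      have hne : (true ∈ z) ↔ ¬ (v = w.reverse) := by
        rw [hz, mem_zipWith_xor w v.reverse (by simp [hwl, hvl])]
        constructor
        · intro h hc; exact h (by rw [hc, List.reverse_reverse])
        · intro h hc; exact h (by rw [hc, List.reverse_reverse])
      have hpow : (1 / 4 : ℝ) ^ m * 4 ^ m = 1 := by rw [← mul_pow]; norm_num
      constructor
      · intro h
        rw [if_neg (by rw [hne]; exact fun hc => hc (hmem.1 h)), hpow]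
      · intro h
        rw [if_pos (hne.2 (fun he => h (hmem.2 he)))]
        refine le_of_eq ?_
        calc (1 / 4 : ℝ) ^ m * (4 ^ m / 4) = ((1 / 4 : ℝ) ^ m * 4 ^ m) / 4 := by ring
          _ = 1 / 4 := by rw [hpow]
    · have h0 : randAccProb Mpal.accepts (Dn (2 * m + 1)) (A ++ c :: B) = 0 := by
        rw [hsum]
        refine Finset.sum_eq_zero (fun r _ => ?_)
        rw [if_neg (eval_reject A B c r.toList (by rw [hAl, r.toList_length])
          (by rw [hBl, r.toList_length]) hgood)]
      constructor
      · intro hmem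
        obtain ⟨u, _, h1, h2, h3⟩ := split_pal hAl hBl hmem
        exact absurd ⟨u, u.reverse, h1, h2, h3⟩ hgood
      · intro _; rw [h0]; norm_num
  · have hn0 : n % 2 = 0 := by omega
    constructor
    · intro hmem
      obtain ⟨w, rfl⟩ := hmem
      exfalso
      simp at hx
      omega
    · intro _
      have h0 : randAccProb Mpal.accepts (Dn n) x = 0 := by
        unfold randAccProb
        refine Finset.sum_eq_zero (fun y _ => ?_)
        by_cases hy : y.toList = List.replicate n none
        · rw [if_neg (by rw [hy]; exact even_reject n hn0 x hx)]
        · rw [show Dn n y = 0 from by rw [Dn, if_neg hn, if_neg hy], ite_self]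
      rw [h0]; norm_num

theorem stmt9 : InREGRn PalHash ∧
    ∃ (Γ : Type) (iΓ : Fintype Γ),
      letI := iΓ
      ∃ (Q : Type) (_ : Fintype Q) (M : DFA (Option Bool × Γ) Q)
        (D : (n : ℕ) → List.Vector Γ n → ℝ),
        (∀ n, IsDist (D n)) ∧
        ∀ (n : ℕ) (x : List (Option Bool)), x.length = n →
          (x ∈ PalHash → 3 / 4 ≤ randAccProb M.accepts (D n) x) ∧
          (x ∉ PalHash → randAccProb M.accepts (D n) x ≤ 1 / 4) := by
  constructor
  · refine ⟨Gam, inferInstance, St, inferInstance, Mpal, 1 / 4, by norm_num, by norm_num,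
      Dn, fun n => ⟨Dn_nonneg n, Dn_sum n⟩, ?_⟩
    intro n x hx
    obtain ⟨h1, h2⟩ := master n x hx
    exact ⟨fun h => by rw [h1 h]; norm_num, h2⟩
  · refine ⟨Gam, inferInstance, St, inferInstance, Mpal, Dn,
      fun n => ⟨Dn_nonneg n, Dn_sum n⟩, ?_⟩
    intro n x hx
    obtain ⟨h1, h2⟩ := master n x hx
    exact ⟨fun h => by rw [h1 h]; norm_num, h2⟩
end
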